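/- Let R = C^∞(ℝ^m,ℝ) and let F ⊆ R be the finite-dimensional linear subspace of all polynomial functions of total degree less than d. Then F is transverse to every ideal 𝔪_Y: for all distinct points y₁, …, y_n ∈ ℝ^m and positive integers k₁, …, k_n with k₁ + ⋯ + k_n = d, one has F + ((𝔪_{y₁})^{k₁} ∩ ⋯ ∩ (𝔪_{y_n})^{k_n}) = R. -/

import Mathlib

open scoped Manifold
open Module
open MvPolynomial MeasureTheory Set

noncomputable section


/-- The ℝ-algebra of smooth real-valued functions on `ℝ^m`. -/
abbrev SmoothFnsE (m : ℕ) : Type _ :=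
  C^(⊤ : ℕ∞)⟮𝓡 m, EuclideanSpace ℝ (Fin m); 𝓘(ℝ, ℝ), ℝ⟯

variable {m : ℕ}

/-- The ideal `𝔪ₓ` of smooth functions on `ℝ^m` vanishing at the point `x`. -/
def mIdealE (x : EuclideanSpace ℝ (Fin m)) : Ideal (SmoothFnsE m) where
  carrier := {f | f x = 0}
  add_mem' := by intro f g hf hg; simp_all
  zero_mem' := by simp
  smul_mem' := by intro c f hf; simp_all

/-- The subspace of `C^∞(ℝ^m,ℝ)` of polynomial functions of total degree less than `d`. -/
def polySubspace (m d : ℕ) : Submodule ℝ (SmoothFnsE m) :=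
  Submodule.span ℝ {f : SmoothFnsE m | ∃ p : MvPolynomial (Fin m) ℝ,
    p.totalDegree < d ∧ ∀ x : EuclideanSpace ℝ (Fin m), f x = MvPolynomial.eval (fun i => x i) p}

@[simp] lemma mem_mIdealE {x : EuclideanSpace ℝ (Fin m)} {f : SmoothFnsE m} :
    f ∈ mIdealE x ↔ f x = 0 := Iff.rfl

lemma smcoe_sum {ι} (s : Finset ι) (f : ι → SmoothFnsE m) (x) :
    (∑ i ∈ s, f i) x = ∑ i ∈ s, f i x :=
  map_sum (ContMDiffMap.evalRingHom x : SmoothFnsE m →+* ℝ) f s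

def toSm (f : EuclideanSpace ℝ (Fin m) → ℝ) (hf : ContDiff ℝ (⊤ : ℕ∞) f) : SmoothFnsE m :=
  ⟨f, by rwa [contMDiff_iff_contDiff]⟩

@[simp] lemma toSm_apply (f : EuclideanSpace ℝ (Fin m) → ℝ) (hf) (x) : toSm f hf x = f x := rfl

lemma smooth_coe (f : SmoothFnsE m) : ContDiff ℝ (⊤:ℕ∞) f := by
  have := f.contMDiff
  rwa [contMDiff_iff_contDiff] at this

lemma contDiff_mvpoly (p : MvPolynomial (Fin m) ℝ) :
    ContDiff ℝ (⊤ : ℕ∞) fun x : EuclideanSpace ℝ (Fin m) => MvPolynomial.eval (fun i => x i) p := by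
  induction p using MvPolynomial.induction_on with
  | C a => simpa using contDiff_const
  | add p q hp hq => simpa using hp.add hq
  | mul_X p i hp => simpa using hp.mul (EuclideanSpace.proj i).contDiff

def evalP (p : MvPolynomial (Fin m) ℝ) : SmoothFnsE m := toSm _ (contDiff_mvpoly p)

def evalRH : MvPolynomial (Fin m) ℝ →+* SmoothFnsE m where
  toFun := evalP
  map_one' := by ext x; simp [evalP]
  map_mul' p q := by ext x; simp [evalP]
  map_zero' := by ext x; simp [evalP]
  map_add' p q := by ext x; simp [evalP]

@[simp] lemma evalRH_apply (p : MvPolynomial (Fin m) ℝ) (x) :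
    (evalRH p : SmoothFnsE m) x = MvPolynomial.eval (fun i => x i) p := rfl

def evalLM : MvPolynomial (Fin m) ℝ →ₗ[ℝ] SmoothFnsE m where
  toFun := evalP
  map_add' p q := by ext x; simp [evalP]
  map_smul' r p := by ext x; simp [evalP, MvPolynomial.smul_eval]

/-- Part 1: finite dimensionality. -/
lemma polySubspace_finiteDimensional (m d : ℕ) : FiniteDimensional ℝ (polySubspace m d) := by
  have hle : polySubspace m d ≤
      Submodule.map (evalLM (m := m)) (restrictTotalDegree (Fin m) ℝ (d - 1)) := by
    rw [polySubspace, Submodule.span_le]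
    rintro f ⟨p, hdeg, hev⟩
    refine ⟨p, (mem_restrictTotalDegree _ _ _).mpr (by omega), ?_⟩
    ext x
    exact (hev x).symm
  exact Submodule.finiteDimensional_of_le hle

/-- Smoothness of a parametric integral, via the convolution API. -/
lemma contDiff_parametric_integral {E : Type*} [NormedAddCommGroup E] [NormedSpace ℝ E]
    (F : E × ℝ → ℝ) (hF : ContDiff ℝ (⊤ : ℕ∞) F) :
    ContDiff ℝ (⊤ : ℕ∞) fun x => ∫ t in Set.Ioc (0:ℝ) 1, F (x, t) := by
  let χ : ContDiffBump (-1/2 : ℝ) := ⟨1, 2, one_pos, one_lt_two⟩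
  set f : ℝ → ℝ := Set.indicator (Set.Ioc (0:ℝ) 1) (fun _ => (1:ℝ)) with hfdef
  set g : E → ℝ → ℝ := fun p u => χ u * F (p, -u) with hgdef
  have hf : LocallyIntegrable f volume := by
    apply Integrable.locallyIntegrable
    rw [hfdef, integrable_indicator_iff measurableSet_Ioc]
    exact integrableOn_const measure_Ioc_lt_top.ne
  have hg : ContDiffOn ℝ (⊤ : ℕ∞) (Function.uncurry g) ((Set.univ : Set E) ×ˢ Set.univ) := by
    apply ContDiff.contDiffOn
    exact (χ.contDiff.comp contDiff_snd).mul (hF.comp (contDiff_fst.prodMk contDiff_snd.neg))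
  have hk : IsCompact (Metric.closedBall (-1/2 : ℝ) 2) := isCompact_closedBall _ _
  have hgs : ∀ p, ∀ u : ℝ, p ∈ (Set.univ : Set E) → u ∉ Metric.closedBall (-1/2 : ℝ) 2 →
      g p u = 0 := by
    intro p u _ hu
    have : χ u = 0 := by
      apply χ.zero_of_le_dist
      simp only [Metric.mem_closedBall, not_le] at hu
      rw [Real.dist_eq] at hu ⊢
      linarith
    simp [hgdef, this]
  have H := contDiffOn_convolution_right_with_param (μ := volume)
    (ContinuousLinearMap.lsmul ℝ ℝ) isOpen_univ hk hgs hf hg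
  have H2 : ContDiff ℝ (⊤ : ℕ∞) fun p : E =>
      convolution f (g p) (ContinuousLinearMap.lsmul ℝ ℝ) volume (0:ℝ) := by
    rw [← contDiffOn_univ]
    have : (fun p : E => convolution f (g p) (ContinuousLinearMap.lsmul ℝ ℝ) volume (0:ℝ)) =
        (fun q : E × ℝ => convolution f (g q.1) (ContinuousLinearMap.lsmul ℝ ℝ) volume q.2) ∘
          (fun p : E => (p, (0:ℝ))) := rfl
    rw [this]
    apply H.comp ((contDiff_id.prodMk contDiff_const).contDiffOn)
    intro x _; exact ⟨trivial, trivial⟩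
  convert H2 using 2 with p
  rw [convolution]
  have : ∀ t : ℝ, (ContinuousLinearMap.lsmul ℝ ℝ) (f t) (g p (0 - t)) =
      Set.indicator (Set.Ioc (0:ℝ) 1) (fun t => F (p, t)) t := by
    intro t
    by_cases ht : t ∈ Set.Ioc (0:ℝ) 1
    · have h1 : χ (-t) = 1 := by
        apply χ.one_of_mem_closedBall
        rw [Metric.mem_closedBall, Real.dist_eq]
        obtain ⟨h2, h3⟩ := ht
        rw [abs_le]; constructor <;> linarith
      simp [hfdef, hgdef, Set.indicator_of_mem ht, h1]
    · simp [hfdef, hgdef, Set.indicator_of_notMem ht]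
  simp only [this]
  rw [integral_indicator measurableSet_Ioc]

lemma euclid_decomp (v : EuclideanSpace ℝ (Fin m)) :
    v = ∑ j, v j • EuclideanSpace.single j (1:ℝ) := by
  have := (EuclideanSpace.basisFun (Fin m) ℝ).sum_repr v
  simp only [EuclideanSpace.basisFun_repr, EuclideanSpace.basisFun_apply] at this
  exact this.symm

lemma hadamard (f : EuclideanSpace ℝ (Fin m) → ℝ) (hf : ContDiff ℝ (⊤ : ℕ∞) f)
    (y : EuclideanSpace ℝ (Fin m)) :
    ∃ g : Fin m → EuclideanSpace ℝ (Fin m) → ℝ, (∀ j, ContDiff ℝ (⊤ : ℕ∞) (g j)) ∧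
      ∀ x, f x = f y + ∑ j, (x j - y j) * g j x := by
  have hfd : ContDiff ℝ (⊤ : ℕ∞) (fderiv ℝ f) := hf.fderiv_right (by exact_mod_cast le_top)
  refine ⟨fun j x => ∫ t in Set.Ioc (0:ℝ) 1,
      fderiv ℝ f (y + t • (x - y)) (EuclideanSpace.single j 1), fun j => ?_, fun x => ?_⟩
  · exact contDiff_parametric_integral _
      (((hfd.comp (contDiff_const.add
        (contDiff_snd.smul (contDiff_fst.sub contDiff_const))))).clm_apply contDiff_const)
  · set γ : ℝ → EuclideanSpace ℝ (Fin m) := fun t => y + t • (x - y) with hγ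
    have hγd : ∀ t : ℝ, HasDerivAt γ (x - y) t := by
      intro t
      have := ((hasDerivAt_id t).smul_const (x - y)).const_add y
      rw [one_smul] at this
      exact this
    have key : ∀ t : ℝ, HasDerivAt (fun t => f (γ t)) (fderiv ℝ f (γ t) (x - y)) t := by
      intro t
      exact (hf.differentiable (by simp) (γ t)).hasFDerivAt.comp_hasDerivAt
        t (hγd t)
    have hcont : Continuous fun t => fderiv ℝ f (γ t) (x - y) :=
      (hfd.continuous.comp (by fun_prop)).clm_apply continuous_const
    have h1 : ∫ t in (0:ℝ)..1, fderiv ℝ f (γ t) (x - y) = f (γ 1) - f (γ 0) := by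
      apply intervalIntegral.integral_eq_sub_of_hasDerivAt (fun t _ => key t)
      exact hcont.intervalIntegrable 0 1
    have hγ1 : γ 1 = x := by simp [hγ]
    have hγ0 : γ 0 = y := by simp [hγ]
    have h2 : ∀ t : ℝ, fderiv ℝ f (γ t) (x - y)
        = ∑ j, (x j - y j) * fderiv ℝ f (γ t) (EuclideanSpace.single j 1) := by
      intro t
      conv_lhs => rw [show x - y = ∑ j, (x j - y j) • EuclideanSpace.single j (1:ℝ) by
        simpa using euclid_decomp (x - y)]
      rw [map_sum]
      simp [smul_eq_mul]
    rw [hγ1, hγ0] at h1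
    have h3 : ∫ t in (0:ℝ)..1, fderiv ℝ f (γ t) (x - y)
        = ∑ j, (x j - y j) *
            ∫ t in Set.Ioc (0:ℝ) 1, fderiv ℝ f (γ t) (EuclideanSpace.single j 1) := by
      rw [intervalIntegral.integral_of_le zero_le_one]
      simp only [h2]
      rw [integral_finset_sum]
      · congr 1; ext j
        rw [← integral_const_mul]
      · intro j _
        apply Continuous.integrableOn_Ioc
        exact continuous_const.mul
          ((hfd.continuous.comp (by fun_prop)).clm_apply continuous_const)
    rw [h3] at h1
    linarith [h1]

lemma taylor : ∀ (k : ℕ) (f : SmoothFnsE m) (y : EuclideanSpace ℝ (Fin m)),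
    ∃ p : MvPolynomial (Fin m) ℝ, p.totalDegree ≤ k ∧ f - evalRH p ∈ (mIdealE y) ^ (k + 1) := by
  intro k
  induction k with
  | zero =>
    intro f y
    refine ⟨C (f y), by simp, ?_⟩
    rw [pow_one]
    simp
  | succ k ih =>
    intro f y
    obtain ⟨g, hg, hfg⟩ := hadamard f (smooth_coe f) y
    choose p hdeg hmem using fun j => ih (toSm (g j) (hg j)) y
    refine ⟨C (f y) + ∑ j, (X j + C (-(y j))) * p j, ?_, ?_⟩
    · refine le_trans (totalDegree_add _ _) (max_le (by simp) ?_)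
      refine le_trans (totalDegree_finset_sum _ _) ?_
      apply Finset.sup_le
      intro j _
      refine le_trans (totalDegree_mul _ _) ?_
      have h1 : (X j + C (-(y j)) : MvPolynomial (Fin m) ℝ).totalDegree ≤ 1 :=
        le_trans (totalDegree_add _ _) (by simp [totalDegree_X])
      have := hdeg j
      omega
    · have key : f - evalRH (C (f y) + ∑ j, (X j + C (-(y j))) * p j)
          = ∑ j, evalRH (X j + C (-(y j))) * (toSm (g j) (hg j) - evalRH (p j)) := by
        ext x
        simp only [ContMDiffMap.coe_sub, Pi.sub_apply, smcoe_sum, ContMDiffMap.coe_mul, Pi.mul_apply,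
          ContMDiffMap.coe_add, Pi.add_apply, evalRH_apply, toSm_apply, map_add, map_sum, map_mul,
          eval_C, eval_X]
        have hsum : ∑ j, (x j + -y j) * (g j x - eval (fun i => x i) (p j))
            = (∑ j, (x j - y j) * g j x)
              - ∑ j, (x j + -y j) * eval (fun i => x i) (p j) := by
          rw [← Finset.sum_sub_distrib]
          apply Finset.sum_congr rfl
          intros; ring
        rw [hfg x, hsum]
        ring
      rw [key]
      apply Ideal.sum_mem
      intro j _
      have h1 : (evalRH (X j + C (-(y j))) : SmoothFnsE m) ∈ mIdealE y := by simp
      have := Ideal.mul_mem_mul h1 (hmem j)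
      rwa [← pow_succ'] at this

lemma mem_pow_of_eventually_zero {g : SmoothFnsE m} {y : EuclideanSpace ℝ (Fin m)}
    (h : ∀ᶠ x in nhds y, g x = 0) (k : ℕ) : g ∈ (mIdealE y) ^ k := by
  obtain ⟨ε, hε, hball⟩ := Metric.eventually_nhds_iff_ball.mp h
  set χ : ContDiffBump y := ⟨ε/2, ε, by positivity, by linarith⟩ with hχ
  set c : SmoothFnsE m := 1 - toSm χ χ.contDiff with hc
  have hcy : c ∈ mIdealE y := by
    have : χ y = 1 := χ.one_of_mem_closedBall (by simp [Metric.mem_closedBall]; positivity)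
    simp [hc, this]
  have hgc : g = g * c ^ k := by
    ext x
    by_cases hx : x ∈ Metric.ball y ε
    · simp [hball x hx]
    · have hx0 : χ x = 0 := by
        rw [← Function.notMem_support, χ.support_eq]
        exact hx
      simp [hc, hx0]
  rw [hgc]
  exact Ideal.mul_mem_left _ _ (Ideal.pow_mem_pow hcy k)

lemma exists_smooth_inverse (e : SmoothFnsE m) (y : EuclideanSpace ℝ (Fin m)) (he : e y ≠ 0) :
    ∃ s : SmoothFnsE m, ∀ᶠ x in nhds y, (s * e) x = 1 := by
  have hopen : IsOpen {x : EuclideanSpace ℝ (Fin m) | e x ≠ 0} :=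
    isOpen_compl_iff.mpr (isClosed_singleton.preimage (smooth_coe e).continuous)
  obtain ⟨ε, hε, hball⟩ := Metric.isOpen_iff.mp hopen y he
  set χ : ContDiffBump y := ⟨ε/2, 3*ε/4, by positivity, by linarith⟩ with hχ
  have htsupp : tsupport χ ⊆ Metric.ball y ε := by
    rw [χ.tsupport_eq]
    intro x hx
    rw [Metric.mem_closedBall] at hx
    rw [Metric.mem_ball]
    have hr : χ.rOut = 3*ε/4 := rfl
    rw [hr] at hx
    linarith
  have hsmooth : ContDiff ℝ (⊤:ℕ∞) fun x => χ x * (e x)⁻¹ := by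
    rw [contDiff_iff_contDiffAt]
    intro x
    by_cases hx : x ∈ Metric.ball y ε
    · exact χ.contDiff.contDiffAt.mul ((smooth_coe e).contDiffAt.inv (hball hx))
    · have hx' : x ∈ (tsupport χ)ᶜ := fun hmem => hx (htsupp hmem)
      have hev : ∀ᶠ x' in nhds x, χ x' * (e x')⁻¹ = 0 := by
        filter_upwards [(isClosed_tsupport χ).isOpen_compl.mem_nhds hx'] with x' hx'
        rw [image_eq_zero_of_notMem_tsupport hx', zero_mul]
      exact contDiffAt_const.congr_of_eventuallyEq hev
  refine ⟨toSm _ hsmooth, ?_⟩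
  filter_upwards [Metric.ball_mem_nhds y (by positivity : (0:ℝ) < ε/2)] with x hx
  have h1 : χ x = 1 := χ.one_of_mem_closedBall (Metric.ball_subset_closedBall hx)
  have h2 : e x ≠ 0 := hball (by rw [Metric.mem_ball] at hx ⊢; linarith)
  simp [h1, inv_mul_cancel₀ h2]

/-- The affine polynomial `x ↦ ⟨x - b, a - b⟩`. -/
def lpoly (a b : EuclideanSpace ℝ (Fin m)) : MvPolynomial (Fin m) ℝ :=
  ∑ c, C (a c - b c) * (X c + C (-(b c)))

lemma lpoly_eval (a b x : EuclideanSpace ℝ (Fin m)) :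
    eval (fun i => x i) (lpoly a b) = ∑ c, (a c - b c) * (x c - b c) := by
  simp only [lpoly, map_sum, map_mul, map_add, eval_C, eval_X]
  apply Finset.sum_congr rfl
  intros; ring

lemma lpoly_deg (a b : EuclideanSpace ℝ (Fin m)) : (lpoly a b).totalDegree ≤ 1 := by
  refine le_trans (totalDegree_finset_sum _ _) ?_
  apply Finset.sup_le
  intro c _
  refine le_trans (totalDegree_mul _ _) ?_
  have : (X c + C (-(b c)) : MvPolynomial (Fin m) ℝ).totalDegree ≤ 1 :=
    le_trans (totalDegree_add _ _) (by simp [totalDegree_X])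
  simp only [totalDegree_C]
  omega

lemma lpoly_self (a b : EuclideanSpace ℝ (Fin m)) :
    eval (fun i => b i) (lpoly a b) = 0 := by
  rw [lpoly_eval]; simp

lemma lpoly_pos (a b : EuclideanSpace ℝ (Fin m)) (hab : a ≠ b) :
    0 < eval (fun i => a i) (lpoly a b) := by
  rw [lpoly_eval]
  have : ∃ c, a c ≠ b c := by
    by_contra hcon
    push_neg at hcon
    exact hab (by ext c; exact hcon c)
  obtain ⟨c, hc⟩ := this
  apply Finset.sum_pos'
  · intro c _
    have : (a c - b c) * (a c - b c) = (a c - b c)^2 := by ring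
    rw [this]
    positivity
  · refine ⟨c, Finset.mem_univ c, ?_⟩
    have h : a c - b c ≠ 0 := sub_ne_zero_of_ne hc
    have : (a c - b c) * (a c - b c) = (a c - b c)^2 := by ring
    rw [this]
    positivity

/-- The subspace `F ⊆ C^∞(ℝ^m,ℝ)` of polynomial functions of total degree
less than `d` is finite dimensional and transverse to every ideal
`𝔪_Y = (𝔪_{y 1})^{k 1} ∩ ⋯ ∩ (𝔪_{y n})^{k n}` where the points `y i` are distinct and the
positive weights `k i` sum to `d`. -/
theorem polySubspace_transverse_to_mY (m d : ℕ) :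
    FiniteDimensional ℝ (polySubspace m d) ∧
    ∀ (n : ℕ) (y : Fin n → EuclideanSpace ℝ (Fin m)), Function.Injective y →
      ∀ k : Fin n → ℕ, (∀ i, 0 < k i) → ∑ i, k i = d →
        polySubspace m d ⊔ (⨅ i, (mIdealE (y i)) ^ (k i)).restrictScalars ℝ = ⊤ := by
  refine ⟨polySubspace_finiteDimensional m d, ?_⟩
  intro n y hy k hk hsum
  rcases Nat.eq_zero_or_pos n with hn | hn
  · subst hn
    rw [iInf_of_empty]
    simp
  -- main case
  have hd : 1 ≤ d := by
    have : n ≤ ∑ i, k i := by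
      calc n = ∑ _i : Fin n, 1 := by simp
      _ ≤ ∑ i, k i := Finset.sum_le_sum (fun i _ => hk i)
    omega
  rw [eq_top_iff]
  rintro f -
  -- Taylor expansion of f at each point
  choose p hpdeg hpmem using fun i => taylor (k i - 1) f (y i)
  have hksucc : ∀ i : Fin n, k i - 1 + 1 = k i := fun i => Nat.succ_pred_eq_of_pos (hk i)
  -- the auxiliary polynomials e i
  set e : Fin n → MvPolynomial (Fin m) ℝ :=
    fun i => ∏ j ∈ Finset.univ.erase i, (lpoly (y i) (y j)) ^ (k j) with he
  have hesum : ∀ i : Fin n, k i + ∑ j ∈ Finset.univ.erase i, k j = d := by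
    intro i
    rw [Finset.add_sum_erase _ _ (Finset.mem_univ i)]
    exact hsum
  have hedeg : ∀ i, (e i).totalDegree ≤ ∑ j ∈ Finset.univ.erase i, k j := by
    intro i
    refine le_trans (totalDegree_finset_prod _ _) (Finset.sum_le_sum ?_)
    intro j _
    refine le_trans (totalDegree_pow _ _) ?_
    have := lpoly_deg (y i) (y j)
    calc k j * (lpoly (y i) (y j)).totalDegree ≤ k j * 1 := Nat.mul_le_mul_left _ this
    _ = k j := by omega
  have heval : ∀ i, (evalRH (e i) : SmoothFnsE m) (y i) ≠ 0 := by
    intro i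
    rw [evalRH_apply, he]
    simp only [map_prod, map_pow]
    apply ne_of_gt
    apply Finset.prod_pos
    intro j hj
    have hij : j ≠ i := Finset.ne_of_mem_erase hj
    exact pow_pos (lpoly_pos (y i) (y j) (fun hcon => hij ((hy hcon).symm))) _
  have hemem : ∀ i j : Fin n, j ≠ i → (evalRH (e i) : SmoothFnsE m) ∈ (mIdealE (y j)) ^ (k j) := by
    intro i j hij
    have hj : j ∈ Finset.univ.erase i := Finset.mem_erase.mpr ⟨hij, Finset.mem_univ j⟩
    rw [he]
    simp only
    rw [← Finset.mul_prod_erase _ _ hj, map_mul, map_pow]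
    apply Ideal.mul_mem_right
    apply Ideal.pow_mem_pow
    simp [lpoly_self]
  -- smooth local inverses
  choose s hs using fun i => exists_smooth_inverse (evalRH (e i)) (y i) (heval i)
  -- second Taylor expansion
  choose w hwdeg hwmem using fun i => taylor (k i - 1) (s i * evalRH (p i)) (y i)
  -- the combined polynomial
  set P : SmoothFnsE m := ∑ i, evalRH (w i * e i) with hP
  have hPpoly : P ∈ polySubspace m d := by
    apply Submodule.sum_mem
    intro i _
    apply Submodule.subset_span
    refine ⟨w i * e i, ?_, fun x => rfl⟩
    refine lt_of_le_of_lt (totalDegree_mul _ _) ?_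
    have h1 := hwdeg i
    have h2 := hedeg i
    have h3 := hesum i
    have h4 := hk i
    omega
  -- membership of the error term in each ideal power
  have hkey : ∀ i, (evalRH (w i) * evalRH (e i) - evalRH (p i) : SmoothFnsE m)
      ∈ (mIdealE (y i)) ^ (k i) := by
    intro i
    have hsplit : (evalRH (w i) * evalRH (e i) - evalRH (p i) : SmoothFnsE m)
        = (evalRH (w i) - s i * evalRH (p i)) * evalRH (e i)
          + (s i * evalRH (e i) - 1) * evalRH (p i) := by ring
    rw [hsplit]
    apply Ideal.add_mem
    · apply Ideal.mul_mem_right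
      have := (mIdealE (y i) ^ (k i - 1 + 1)).neg_mem (hwmem i)
      rw [hksucc i] at this
      simpa using this
    · apply Ideal.mul_mem_right
      apply mem_pow_of_eventually_zero
      filter_upwards [hs i] with x hx
      simp only [ContMDiffMap.coe_sub, Pi.sub_apply, ContMDiffMap.coe_mul, Pi.mul_apply,
        ContMDiffMap.coe_one, Pi.one_apply] at hx ⊢
      rw [hx]
      ring
  have hgmem : ∀ i, f - P ∈ (mIdealE (y i)) ^ (k i) := by
    intro i
    have hPsplit : P = evalRH (w i * e i) + ∑ j ∈ Finset.univ.erase i, evalRH (w j * e j) :=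
      (Finset.add_sum_erase _ _ (Finset.mem_univ i)).symm
    have hfP : f - P = (f - evalRH (p i)) - (evalRH (w i) * evalRH (e i) - evalRH (p i))
        - ∑ j ∈ Finset.univ.erase i, evalRH (w j * e j) := by
      rw [hPsplit, map_mul]
      ring
    rw [hfP]
    apply Ideal.sub_mem
    · apply Ideal.sub_mem
      · have := hpmem i
        rwa [hksucc i] at this
      · exact hkey i
    · apply Ideal.sum_mem
      intro j hj
      rw [map_mul]
      apply Ideal.mul_mem_left
      exact hemem j i (Finset.ne_of_mem_erase hj).symm
  have hfsplit : f = P + (f - P) := by ring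
  rw [hfsplit]
  apply Submodule.add_mem
  · exact Submodule.mem_sup_left hPpoly
  · apply Submodule.mem_sup_right
    rw [Submodule.restrictScalars_mem, Submodule.mem_iInf]
    exact hgmem
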